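/- Let W ⊆ ℝ be nonempty, let L : W → ℝ and ℓ : W → ℝ with ℓ being G-Lipschitz (G > 0). Fix σ ∈ ℝ and set σ' = σ + 2G. If w_t minimizes w ↦ L(w) − σ' w over W and w_{t+1} minimizes w ↦ L(w) + ℓ(w) − σ w over W, then w_t ≥ w_{t+1}. -/
import Mathlib

theorem stmt_1 (W : Set ℝ) (hW : W.Nonempty) (L ℓ : ℝ → ℝ) (G : ℝ) (hG : 0 < G)
    (hLip : ∀ x ∈ W, ∀ y ∈ W, |ℓ x - ℓ y| ≤ G * |x - y|)
    (σ : ℝ) (wt wt1 : ℝ)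
    (hwt : wt ∈ W ∧ ∀ w ∈ W, L wt - (σ + 2 * G) * wt ≤ L w - (σ + 2 * G) * w)
    (hwt1 : wt1 ∈ W ∧ ∀ w ∈ W, L wt1 + ℓ wt1 - σ * wt1 ≤ L w + ℓ w - σ * w) :
    wt ≥ wt1 := by
  by_contra h
  push_neg at h
  have h1 := hwt.2 wt1 hwt1.1
  have h2 := hwt1.2 wt hwt.1
  have h3 := hLip wt hwt.1 wt1 hwt1.1
  rw [abs_of_neg (by linarith : wt - wt1 < 0)] at h3
  have h4 : ℓ wt - ℓ wt1 ≤ G * (wt1 - wt) := by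
    have := abs_le.mp h3 |>.2
    linarith
  nlinarith
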